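/- Let f : [a,b] → ℝ be differentiable with γ ≤ f'(t) ≤ Γ on [a,b]. Then for all x ∈ [a,b], |f(x) - ((γ+Γ)/2)·(x - (a+b)/2) - (1/(b-a))∫_a^b f(t)dt| ≤ ((Γ-γ)/2)·((x-a)² + (b-x)²)/(2(b-a)). -/

import Mathlib

open MeasureTheory intervalIntegral

theorem perturbed_ostrowski_ujevic
    (a b γ Γ : ℝ) (f f' : ℝ → ℝ)
    (hab : a < b)
    (hf : ∀ t ∈ Set.Icc a b, HasDerivAt f (f' t) t)
    (hf'int : IntervalIntegrable f' volume a b)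
    (hbound : ∀ t ∈ Set.Icc a b, γ ≤ f' t ∧ f' t ≤ Γ) :
    ∀ x ∈ Set.Icc a b,
      |f x - (γ + Γ) / 2 * (x - (a + b) / 2) - (1 / (b - a)) * ∫ t in a..b, f t|
        ≤ (Γ - γ) / 2 * (((x - a) ^ 2 + (b - x) ^ 2) / (2 * (b - a))) := by
  intro x hx
  obtain ⟨hax, hxb⟩ := hx
  set c : ℝ := (γ + Γ) / 2 with hc
  set K : ℝ := (Γ - γ) / 2 with hK
  have hba : (0:ℝ) < b - a := by linarith
  have hIcc1 : Set.uIcc a x ⊆ Set.Icc a b := by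
    rw [Set.uIcc_of_le hax]; exact Set.Icc_subset_Icc le_rfl hxb
  have hIcc2 : Set.uIcc x b ⊆ Set.Icc a b := by
    rw [Set.uIcc_of_le hxb]; exact Set.Icc_subset_Icc hax le_rfl
  have hIccab : Set.uIcc a b ⊆ Set.Icc a b := by rw [Set.uIcc_of_le hab.le]
  -- continuity of f
  have hfc : ContinuousOn f (Set.Icc a b) := fun t ht => (hf t ht).continuousAt.continuousWithinAt
  have hfint : IntervalIntegrable f volume a b :=
    (hfc.mono hIccab).intervalIntegrable
  have hint1 : IntervalIntegrable f' volume a x :=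
    hf'int.mono_set (by rw [Set.uIcc_of_le hab.le]; exact hIcc1)
  have hint2 : IntervalIntegrable f' volume x b :=
    hf'int.mono_set (by rw [Set.uIcc_of_le hab.le]; exact hIcc2)
  have hg1 : IntervalIntegrable (fun t => (t - a) * (f' t - c)) volume a x :=
    (hint1.sub (intervalIntegrable_const)).continuousOn_mul
      (by fun_prop)
  have hg2 : IntervalIntegrable (fun t => (t - b) * (f' t - c)) volume x b :=
    (hint2.sub (intervalIntegrable_const)).continuousOn_mul
      (by fun_prop)
  -- integration by parts on [a, x]
  have ibp1 : ∫ t in a..x, (t - a) * f' t = (x - a) * f x - ∫ t in a..x, f t := by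
    have := integral_mul_deriv_eq_deriv_mul (a := a) (b := x)
      (u := fun t => t - a) (v := f) (u' := fun _ => (1:ℝ)) (v' := f')
      (fun t _ => (hasDerivAt_id t).sub_const a)
      (fun t ht => hf t (hIcc1 ht))
      intervalIntegrable_const hint1
    simpa using this
  have ibp2 : ∫ t in x..b, (t - b) * f' t = (b - x) * f x - ∫ t in x..b, f t := by
    have := integral_mul_deriv_eq_deriv_mul (a := x) (b := b)
      (u := fun t => t - b) (v := f) (u' := fun _ => (1:ℝ)) (v' := f')
      (fun t _ => (hasDerivAt_id t).sub_const b)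
      (fun t ht => hf t (hIcc2 ht))
      intervalIntegrable_const hint2
    simp at this
    rw [this]; ring
  have hlin1 : ∫ t in a..x, (t - a) = (x - a) ^ 2 / 2 := by
    rw [intervalIntegral.integral_sub (intervalIntegrable_id) intervalIntegrable_const,
      integral_id, intervalIntegral.integral_const, smul_eq_mul]
    ring
  have hlin2 : ∫ t in x..b, (t - b) = -((b - x) ^ 2 / 2) := by
    rw [intervalIntegral.integral_sub (intervalIntegrable_id) intervalIntegrable_const,
      integral_id, intervalIntegral.integral_const, smul_eq_mul]
    ring
  have hsplit : (∫ t in a..b, f t) = (∫ t in a..x, f t) + ∫ t in x..b, f t :=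
    (integral_add_adjacent_intervals (hfint.mono_set (by rw [Set.uIcc_of_le hab.le]; exact hIcc1))
      (hfint.mono_set (by rw [Set.uIcc_of_le hab.le]; exact hIcc2))).symm
  have e1 : ∫ t in a..x, (t - a) * (f' t - c)
      = (x - a) * f x - (∫ t in a..x, f t) - c * ((x - a) ^ 2 / 2) := by
    have : ∀ t, (t - a) * (f' t - c) = (t - a) * f' t - c * (t - a) := fun t => by ring
    simp_rw [this]
    rw [intervalIntegral.integral_sub
      (hint1.continuousOn_mul (by fun_prop))
      ((intervalIntegrable_id.sub intervalIntegrable_const).const_mul c),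
      ibp1, intervalIntegral.integral_const_mul, hlin1]
  have e2 : ∫ t in x..b, (t - b) * (f' t - c)
      = (b - x) * f x - (∫ t in x..b, f t) + c * ((b - x) ^ 2 / 2) := by
    have : ∀ t, (t - b) * (f' t - c) = (t - b) * f' t - c * (t - b) := fun t => by ring
    simp_rw [this]
    rw [intervalIntegral.integral_sub
      (hint2.continuousOn_mul (by fun_prop))
      ((intervalIntegrable_id.sub intervalIntegrable_const).const_mul c),
      ibp2, intervalIntegral.integral_const_mul, hlin2]
    ring
  -- bounds
  have hgK : ∀ t ∈ Set.Icc a b, |f' t - c| ≤ K := by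
    intro t ht
    obtain ⟨h1, h2⟩ := hbound t ht
    rw [abs_le]; constructor <;> [skip; skip] <;> simp [hc, hK] <;> linarith
  have bd1 : |∫ t in a..x, (t - a) * (f' t - c)| ≤ K * ((x - a) ^ 2 / 2) := by
    calc |∫ t in a..x, (t - a) * (f' t - c)| ≤ ∫ t in a..x, |(t - a) * (f' t - c)| :=
          abs_integral_le_integral_abs hax
      _ ≤ ∫ t in a..x, (t - a) * K := by
          apply intervalIntegral.integral_mono_on hax hg1.abs
            ((intervalIntegrable_id.sub intervalIntegrable_const).mul_const K)
          intro t ht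
          rw [abs_mul, abs_of_nonneg (by linarith [ht.1] : (0:ℝ) ≤ t - a)]
          exact mul_le_mul_of_nonneg_left
            (hgK t ⟨ht.1, ht.2.trans hxb⟩) (by linarith [ht.1])
      _ = K * ((x - a) ^ 2 / 2) := by
          rw [intervalIntegral.integral_mul_const, hlin1]; ring
  have bd2 : |∫ t in x..b, (t - b) * (f' t - c)| ≤ K * ((b - x) ^ 2 / 2) := by
    calc |∫ t in x..b, (t - b) * (f' t - c)| ≤ ∫ t in x..b, |(t - b) * (f' t - c)| :=
          abs_integral_le_integral_abs hxb
      _ ≤ ∫ t in x..b, (b - t) * K := by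
          apply intervalIntegral.integral_mono_on hxb hg2.abs
            (((_root_.intervalIntegrable_const (c := b)).sub intervalIntegrable_id).mul_const K)
          intro t ht
          rw [abs_mul, abs_of_nonpos (by linarith [ht.2] : t - b ≤ 0)]
          have : -(t - b) = b - t := by ring
          rw [this]
          exact mul_le_mul_of_nonneg_left
            (hgK t ⟨hax.trans ht.1, ht.2⟩) (by linarith [ht.2])
      _ = K * ((b - x) ^ 2 / 2) := by
          have : ∀ t : ℝ, (b - t) * K = -((t - b) * K) := fun t => by ring
          simp_rw [this]
          rw [intervalIntegral.integral_neg, intervalIntegral.integral_mul_const, hlin2]; ring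
  -- combine
  have key : f x - c * (x - (a + b) / 2) - (1 / (b - a)) * ∫ t in a..b, f t
      = (1 / (b - a)) * ((∫ t in a..x, (t - a) * (f' t - c)) + ∫ t in x..b, (t - b) * (f' t - c)) := by
    rw [e1, e2, hsplit]
    field_simp
    ring
  rw [key, abs_mul, abs_of_nonneg (by positivity : (0:ℝ) ≤ 1 / (b - a))]
  have : |(∫ t in a..x, (t - a) * (f' t - c)) + ∫ t in x..b, (t - b) * (f' t - c)|
      ≤ K * ((x - a) ^ 2 / 2) + K * ((b - x) ^ 2 / 2) :=
    (abs_add_le _ _).trans (add_le_add bd1 bd2)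
  calc (1 / (b - a)) * |(∫ t in a..x, (t - a) * (f' t - c)) + ∫ t in x..b, (t - b) * (f' t - c)|
      ≤ (1 / (b - a)) * (K * ((x - a) ^ 2 / 2) + K * ((b - x) ^ 2 / 2)) :=
        mul_le_mul_of_nonneg_left this (by positivity)
    _ = K * (((x - a) ^ 2 + (b - x) ^ 2) / (2 * (b - a))) := by
        field_simp
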